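/- Let E be a finite family of subsets (hyperedges) of a finite vertex set V, x : E → ℝ≥0 a fractional edge cover (∑_{F ∋ v} x_F ≥ 1 for every v ∈ V), and for each F let N_F ≥ 1 be a positive real. Define AGM = ∏_F N_F^{x_F}. If for some vertex v one replaces each N_F with F ∋ v by a value N'_F ≤ N_F and drops the covering requirement at v, the new product ∏_F (N'_F)^{x_F} ≤ AGM · max_{F ∋ v} (N'_F/N_F). -/

import Mathlib

open Finset

/-- Binding one variable decreases the AGM bound by at least the maximum relative degree:
if `x` is a fractional edge cover, `N' F ≤ N F` for edges containing `v` (and `N' F = N F`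
otherwise), then `∏ F, (N' F)^(x F) ≤ (∏ F, (N F)^(x F)) · max_{F ∋ v} (N' F / N F)`. -/
theorem agm_residual_bound {ι V : Type*} [DecidableEq V]
    (s : Finset ι) (edge : ι → Finset V) (x : ι → ℝ) (Nn N' : ι → ℝ) (v : V)
    (hx : ∀ F ∈ s, 0 ≤ x F)
    (hN : ∀ F ∈ s, 1 ≤ Nn F)
    (hN'pos : ∀ F ∈ s, 0 < N' F)
    (hle : ∀ F ∈ s, v ∈ edge F → N' F ≤ Nn F)
    (heq : ∀ F ∈ s, v ∉ edge F → N' F = Nn F)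
    (hcover : 1 ≤ ∑ F ∈ s.filter (fun F => v ∈ edge F), x F)
    (hne : (s.filter (fun F => v ∈ edge F)).Nonempty) :
    ∏ F ∈ s, (N' F) ^ (x F) ≤
      (∏ F ∈ s, (Nn F) ^ (x F)) *
        (s.filter (fun F => v ∈ edge F)).sup' hne (fun F => N' F / Nn F) := by
  classical
  set t := s.filter (fun F => v ∈ edge F) with ht
  set M := t.sup' hne (fun F => N' F / Nn F) with hM
  have hts : t ⊆ s := filter_subset _ _
  have hNpos : ∀ F ∈ s, 0 < Nn F := fun F hF => lt_of_lt_of_le one_pos (hN F hF)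
  have hMpos : 0 < M := by
    obtain ⟨F, hF⟩ := hne
    have : 0 < N' F / Nn F :=
      div_pos (hN'pos F (hts hF)) (hNpos F (hts hF))
    exact lt_of_lt_of_le this (le_sup' (fun F => N' F / Nn F) hF)
  have hM1 : M ≤ 1 := by
    apply sup'_le
    intro F hF
    have hFs := hts hF
    have hFv : v ∈ edge F := (mem_filter.mp hF).2
    exact div_le_one_of_le₀ (hle F hFs hFv) (hNpos F hFs).le
  have hratio : ∀ F ∈ t, N' F ≤ M * Nn F := by
    intro F hF
    have hFs := hts hF
    have h1 : N' F / Nn F ≤ M := le_sup' (fun F => N' F / Nn F) hF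
    calc N' F = (N' F / Nn F) * Nn F := (div_mul_cancel₀ _ (hNpos F hFs).ne').symm
      _ ≤ M * Nn F := by
          exact mul_le_mul_of_nonneg_right h1 (hNpos F hFs).le
  -- split products
  have hsplit : ∀ (g : ι → ℝ), ∏ F ∈ s, g F = (∏ F ∈ t, g F) * ∏ F ∈ s \ t, g F := by
    intro g
    rw [← prod_sdiff hts, mul_comm]
  rw [hsplit (fun F => (N' F) ^ (x F)), hsplit (fun F => (Nn F) ^ (x F))]
  have heqout : ∏ F ∈ s \ t, (N' F) ^ (x F) = ∏ F ∈ s \ t, (Nn F) ^ (x F) := by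
    apply prod_congr rfl
    intro F hF
    have hFs : F ∈ s := (mem_sdiff.mp hF).1
    have hFnt : v ∉ edge F := by
      have := (mem_sdiff.mp hF).2
      simp only [ht, mem_filter, not_and] at this
      exact fun h => this hFs h
    rw [heq F hFs hFnt]
  rw [heqout]
  have houtpos : 0 ≤ ∏ F ∈ s \ t, (Nn F) ^ (x F) :=
    prod_nonneg fun F hF => Real.rpow_nonneg (hNpos F (mem_sdiff.mp hF).1).le _
  rw [mul_right_comm]
  apply mul_le_mul_of_nonneg_right _ houtpos
  -- core: ∏_t N'^x ≤ (∏_t Nn^x) * M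
  have h1 : ∏ F ∈ t, (N' F) ^ (x F) ≤ ∏ F ∈ t, (M * Nn F) ^ (x F) := by
    apply prod_le_prod
    · intro F hF; exact Real.rpow_nonneg (hN'pos F (hts hF)).le _
    · intro F hF
      exact Real.rpow_le_rpow (hN'pos F (hts hF)).le (hratio F hF) (hx F (hts hF))
  have h2 : ∏ F ∈ t, (M * Nn F) ^ (x F)
      = (∏ F ∈ t, M ^ (x F)) * ∏ F ∈ t, (Nn F) ^ (x F) := by
    rw [← prod_mul_distrib]
    apply prod_congr rfl
    intro F hF
    exact Real.mul_rpow hMpos.le (hNpos F (hts hF)).le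
  have h3 : ∏ F ∈ t, M ^ (x F) = M ^ (∑ F ∈ t, x F) := by
    exact (Real.rpow_sum_of_pos hMpos _ _).symm
  have h4 : M ^ (∑ F ∈ t, x F) ≤ M := by
    have := Real.rpow_le_rpow_of_exponent_ge hMpos hM1 hcover
    simpa using this
  calc ∏ F ∈ t, (N' F) ^ (x F)
      ≤ (∏ F ∈ t, M ^ (x F)) * ∏ F ∈ t, (Nn F) ^ (x F) := by rw [← h2]; exact h1
    _ = M ^ (∑ F ∈ t, x F) * ∏ F ∈ t, (Nn F) ^ (x F) := by rw [h3]
    _ ≤ M * ∏ F ∈ t, (Nn F) ^ (x F) := by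
        apply mul_le_mul_of_nonneg_right h4
        exact prod_nonneg fun F hF => Real.rpow_nonneg (hNpos F (hts hF)).le _
    _ = (∏ F ∈ t, (Nn F) ^ (x F)) * M := mul_comm _ _
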